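/- The number of well labelled trees with n edges equals (2/(n+2)) times the number of unconstrained well labelled trees with n edges, i.e. |W_n| = (2/(n+2)) · (3^n/(n+1)) · C(2n,n). -/

import Mathlib

/-- Rooted plane trees with integer labels on vertices. -/
inductive LTree : Type
  | node : ℤ → List LTree → LTree

namespace LTree

/-- The label of the root. -/
def label : LTree → ℤ
  | .node v _ => v

mutual
  /-- Number of edges of a labelled plane tree. -/
  def numEdges : LTree → ℕ
    | .node _ ts => numEdgesL ts
  def numEdgesL : List LTree → ℕ
    | [] => 0
    | t :: r => numEdges t + 1 + numEdgesL r
end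

mutual
  /-- The labels of two adjacent vertices differ by at most 1. -/
  def Good : LTree → Prop
    | .node v ts => GoodL v ts
  def GoodL : ℤ → List LTree → Prop
    | _, [] => True
    | v, t :: r => |label t - v| ≤ 1 ∧ Good t ∧ GoodL v r
end

mutual
  /-- The multiset of all vertex labels. -/
  def labels : LTree → Multiset ℤ
    | .node v ts => v ::ₘ labelsL ts
  def labelsL : List LTree → Multiset ℤ
    | [] => 0
    | t :: r => labels t + labelsL r
end

end LTree

/-- Unconstrained well labelled trees (labels in `ℤ`) with `n` edges. -/
def EmbTrees (n : ℕ) : Set LTree :=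
  {T | T.Good ∧ T.label = 1 ∧ T.numEdges = n}

/-- Well labelled trees with `n` edges: positive labels, root label `1`,
adjacent labels differing by at most `1`. -/
def WLTrees (n : ℕ) : Set LTree :=
  {T | T.Good ∧ (∀ v ∈ T.labels, 1 ≤ v) ∧ T.label = 1 ∧ T.numEdges = n}

open Finset PowerSeries


/-- `useq n = 3^n * catalan n`: the number of unconstrained well labelled trees. -/
def useq (n : ℕ) : ℕ := 3 ^ n * catalan n

theorem useq_zero : useq 0 = 1 := by simp [useq]

theorem useq_succ (n : ℕ) :
    useq (n + 1) = ∑ m ∈ range (n + 1), (3 * useq m) * useq (n - m) := by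
  have h := catalan_succ' n
  rw [Finset.Nat.sum_antidiagonal_eq_sum_range_succ_mk] at h
  rw [useq, h, Finset.mul_sum]
  refine Finset.sum_congr rfl fun m hm => ?_
  have hm' : m ≤ n := Nat.lt_succ_iff.mp (Finset.mem_range.mp hm)
  have hmn : m + (n - m) = n := by omega
  have : 3 ^ (n + 1) = 3 * 3 ^ m * 3 ^ (n - m) := by
    rw [mul_assoc, ← pow_add, hmn, pow_succ, mul_comm]
  rw [useq, useq, this]
  ring

/-- The count of well labelled trees with labels `≥ 1`, root label `j`, `n` edges
(`0` if `j = 0`). -/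
def fseq : ℕ → ℕ → ℕ
  | 0, _ => 0
  | _ + 1, 0 => 1
  | j + 1, n + 1 => ∑ m ∈ (range (n + 1)).attach,
      (fseq j m.1 + fseq (j + 1) m.1 + fseq (j + 2) m.1) * fseq (j + 1) (n - m.1)
  termination_by j n => n
  decreasing_by
  · exact Finset.mem_range.mp m.2
  · exact Finset.mem_range.mp m.2
  · exact Finset.mem_range.mp m.2
  · exact Nat.lt_succ_of_le (Nat.sub_le n m.1)

theorem fseq_zero (n : ℕ) : fseq 0 n = 0 := by rw [fseq]

theorem fseq_succ_zero (j : ℕ) : fseq (j + 1) 0 = 1 := by rw [fseq]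

theorem fseq_succ_succ (j n : ℕ) :
    fseq (j + 1) (n + 1) = ∑ m ∈ range (n + 1),
      (fseq j m + fseq (j + 1) m + fseq (j + 2) m) * fseq (j + 1) (n - m) := by
  rw [fseq]
  exact Finset.sum_attach (range (n + 1)) (fun m => (fseq j m + fseq (j + 1) m + fseq (j + 2) m) * fseq (j + 1) (n - m))

/-- For `n < j` the positivity constraint is invisible. -/
theorem fseq_eq_useq : ∀ n j : ℕ, n < j → fseq j n = useq n := by
  intro n
  induction n using Nat.strong_induction_on with
  | _ n ih =>
    intro j hj
    match n, j with
    | 0, j + 1 => rw [fseq_succ_zero, useq_zero]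
    | n + 1, j + 1 =>
      rw [fseq_succ_succ, useq_succ]
      refine Finset.sum_congr rfl fun m hm => ?_
      have hm' : m ≤ n := Nat.lt_succ_iff.mp (Finset.mem_range.mp hm)
      have hj' : n + 1 < j + 1 := hj
      have h1 : fseq j m = useq m := ih m (by omega) j (by omega)
      have h2 : fseq (j + 1) m = useq m := ih m (by omega) (j + 1) (by omega)
      have h3 : fseq (j + 2) m = useq m := ih m (by omega) (j + 2) (by omega)
      have h4 : fseq (j + 1) (n - m) = useq (n - m) := ih (n - m) (by omega) (j + 1) (by omega)
      rw [h1, h2, h3, h4]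
      ring

noncomputable def Useries : PowerSeries ℚ := PowerSeries.mk fun n => (useq n : ℚ)
noncomputable def Fseries (j : ℕ) : PowerSeries ℚ := PowerSeries.mk fun n => (fseq j n : ℚ)

theorem Fseries_zero : Fseries 0 = 0 := by
  ext n
  simp [Fseries, fseq_zero]

theorem hU : Useries = 1 + X * (3 * Useries ^ 2) := by
  ext n
  cases n with
  | zero => simp [Useries, useq_zero]
  | succ n =>
    rw [map_add, PowerSeries.coeff_one, if_neg (Nat.succ_ne_zero n), coeff_succ_X_mul]
    have : (3 : ℚ⟦X⟧) * Useries ^ 2 = (C 3) * (Useries * Useries) := by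
      rw [map_ofNat]; ring
    rw [this, coeff_C_mul, coeff_mul, Finset.Nat.sum_antidiagonal_eq_sum_range_succ_mk]
    simp only [Useries, coeff_mk, useq_succ, Nat.cast_sum, Nat.cast_mul, Nat.cast_ofNat,
      zero_add, Finset.mul_sum]
    refine Finset.sum_congr rfl fun m hm => by ring

theorem hF (j : ℕ) : Fseries (j + 1) =
    1 + X * ((Fseries j + Fseries (j + 1) + Fseries (j + 2)) * Fseries (j + 1)) := by
  ext n
  cases n with
  | zero => simp [Fseries, fseq_succ_zero]
  | succ n =>
    rw [map_add, PowerSeries.coeff_one, if_neg (Nat.succ_ne_zero n), coeff_succ_X_mul,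
      coeff_mul, Finset.Nat.sum_antidiagonal_eq_sum_range_succ_mk]
    simp only [Fseries, coeff_mk, fseq_succ_succ, Nat.cast_sum, Nat.cast_mul, Nat.cast_add,
      map_add, zero_add]

/-- The conserved quantity (a QRT-type invariant of the recursion). -/
noncomputable def Pinv (j : ℕ) : ℚ⟦X⟧ :=
  3 * (Fseries j + Fseries (j + 1) - Fseries j * Fseries (j + 1)) +
    3 * X * (Fseries j * Fseries (j + 1) * (Fseries j + Fseries (j + 1))) +
    Useries ^ 2 - 4 * Useries

theorem Pinv_succ (j : ℕ) : Pinv (j + 1) = Pinv j := by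
  have h := hF j
  unfold Pinv
  linear_combination (-3 * (Fseries (j + 2) - Fseries j)) * h

theorem Pinv_eq_zero : ∀ j, Pinv j = Pinv 0 := by
  intro j
  induction j with
  | zero => rfl
  | succ j ih => rw [Pinv_succ, ih]

theorem X_pow_dvd_sub (j : ℕ) : (X : ℚ⟦X⟧) ^ j ∣ Fseries j - Useries := by
  rw [PowerSeries.X_pow_dvd_iff]
  intro m hm
  rw [map_sub]
  simp [Fseries, Useries, fseq_eq_useq m j hm]

theorem Pinv_dvd (j : ℕ) : (X : ℚ⟦X⟧) ^ j ∣ Pinv j := by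
  obtain ⟨p, hp⟩ := X_pow_dvd_sub j
  obtain ⟨q, hq⟩ := X_pow_dvd_sub (j + 1)
  have key : Pinv j = X ^ j *
      (p * (3 - 3 * Fseries (j + 1) + 3 * X * Fseries (j + 1) * (Fseries j + Useries) +
        3 * X * Useries ^ 2) +
       (X * q) * (3 - 3 * Useries + 3 * X * Useries ^ 2 +
        3 * X * Fseries j * (Fseries (j + 1) + Useries))) := by
    have ha : Fseries j = Useries + X ^ j * p := by linear_combination hp
    have hb : Fseries (j + 1) = Useries + X ^ j * (X * q) := by linear_combination hq
    unfold Pinv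
    rw [ha, hb]
    linear_combination (-2 * Useries) * hU
  exact ⟨_, key⟩

theorem Pinv_zero : Pinv 0 = 0 := by
  ext n
  rw [map_zero]
  have h := Pinv_dvd (n + 1)
  rw [Pinv_eq_zero (n + 1)] at h
  exact (PowerSeries.X_pow_dvd_iff.mp h) n (Nat.lt_succ_self n)

theorem key_series : (X : ℚ⟦X⟧) * ((C 9) * Fseries 1) =
    (C 12) * (X * Useries) - Useries + 1 := by
  have h0 := Pinv_zero
  unfold Pinv at h0
  rw [Fseries_zero] at h0
  rw [map_ofNat, map_ofNat]
  linear_combination (3 * (X : ℚ⟦X⟧)) * h0 + hU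

theorem key_coeff (n : ℕ) : (9 : ℚ) * fseq 1 n = 12 * useq n - useq (n + 1) := by
  have h := congrArg (PowerSeries.coeff (R := ℚ) (n + 1)) key_series
  rw [coeff_succ_X_mul, coeff_C_mul, map_add, map_sub, coeff_C_mul, coeff_succ_X_mul,
    PowerSeries.coeff_one, if_neg (Nat.succ_ne_zero n)] at h
  simpa [Fseries, Useries] using h

theorem key_nat (n : ℕ) : 9 * fseq 1 n + useq (n + 1) = 12 * useq n := by
  have h := key_coeff n
  have : ((9 * fseq 1 n + useq (n + 1) : ℕ) : ℚ) = ((12 * useq n : ℕ) : ℚ) := by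
    push_cast
    linarith
  exact_mod_cast this

namespace CVcount

noncomputable instance : DecidableEq LTree := Classical.decEq _

theorem label_mem_labels (T : LTree) : T.label ∈ T.labels := by
  cases T with
  | node v ts => rw [LTree.labels]; exact Multiset.mem_cons_self _ _

theorem node_injective (c : ℤ) : Function.Injective (LTree.node c) := by
  intro a b h
  injection h

theorem cons_pair_injective :
    Function.Injective (fun p : LTree × List LTree => p.1 :: p.2) := by
  rintro ⟨a, b⟩ ⟨c, d⟩ h
  simpa using h

section Generic

variable (A : ℤ → Prop)

noncomputable local instance : DecidablePred A := fun _ => Classical.propDecidable _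

noncomputable def finFS : ℕ → ℤ → Finset (List LTree)
  | 0, _ => {[]}
  | n + 1, c =>
      (range (n + 1)).attach.biUnion fun m =>
        (((if A (c - 1) then (finFS m.1 (c - 1)).image (LTree.node (c - 1)) else ∅) ∪
          (if A c then (finFS m.1 c).image (LTree.node c) else ∅) ∪
          (if A (c + 1) then (finFS m.1 (c + 1)).image (LTree.node (c + 1)) else ∅)) ×ˢ
          finFS (n - m.1) c).image fun p => p.1 :: p.2
  termination_by n _ => n
  decreasing_by all_goals (have := Finset.mem_range.mp m.2; omega)

noncomputable def finTS (c : ℤ) (n : ℕ) : Finset LTree :=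
  if A c then (finFS A n c).image (LTree.node c) else ∅

def IsGoodForest (c : ℤ) (n : ℕ) (ts : List LTree) : Prop :=
  LTree.GoodL c ts ∧ (∀ v ∈ LTree.labelsL ts, A v) ∧ LTree.numEdgesL ts = n

def IsGoodTree (c : ℤ) (n : ℕ) (T : LTree) : Prop :=
  T.Good ∧ (∀ v ∈ T.labels, A v) ∧ T.label = c ∧ T.numEdges = n

theorem finTS_mem_of (n : ℕ) (h : ∀ c ts, ts ∈ finFS A n c ↔ IsGoodForest A c n ts) :
    ∀ c T, T ∈ finTS A c n ↔ IsGoodTree A c n T := by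
  intro c T
  unfold finTS
  by_cases hA : A c
  · rw [if_pos hA, Finset.mem_image]
    constructor
    · rintro ⟨ts, hts, rfl⟩
      obtain ⟨h1, h2, h3⟩ := (h c ts).mp hts
      refine ⟨by rw [LTree.Good]; exact h1, ?_, rfl, by rw [LTree.numEdges]; exact h3⟩
      intro v hv
      rw [LTree.labels, Multiset.mem_cons] at hv
      rcases hv with rfl | hv
      · exact hA
      · exact h2 v hv
    · rintro ⟨h1, h2, h3, h4⟩
      cases T with
      | node v ts =>
        have hv : v = c := h3
        subst hv
        refine ⟨ts, (h v ts).mpr ⟨by rw [LTree.Good] at h1; exact h1, ?_,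
          by rw [LTree.numEdges] at h4; exact h4⟩, rfl⟩
        intro w hw
        exact h2 w (by rw [LTree.labels]; exact Multiset.mem_cons_of_mem hw)
  · rw [if_neg hA]
    simp only [Finset.notMem_empty, false_iff]
    rintro ⟨h1, h2, h3, h4⟩
    exact hA (h3 ▸ h2 _ (label_mem_labels T))

theorem mem_finFS : ∀ n c ts, ts ∈ finFS A n c ↔ IsGoodForest A c n ts := by
  intro n
  induction n using Nat.strong_induction_on with
  | _ n ih =>
    match n with
    | 0 =>
      intro c ts
      rw [finFS]
      simp only [Finset.mem_singleton]
      constructor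
      · rintro rfl
        refine ⟨by rw [LTree.GoodL]; trivial, ?_, by rw [LTree.numEdgesL]⟩
        intro v hv
        rw [LTree.labelsL] at hv
        simp at hv
      · rintro ⟨h1, h2, h3⟩
        cases ts with
        | nil => rfl
        | cons t r => rw [LTree.numEdgesL] at h3; omega
    | n + 1 =>
      intro c ts
      have fold : ∀ (c' : ℤ) (m : ℕ),
          (if A c' then (finFS A m c').image (LTree.node c') else ∅) = finTS A c' m :=
        fun _ _ => rfl
      rw [finFS]
      simp only [fold, Finset.mem_biUnion, Finset.mem_attach, true_and, Finset.mem_image,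
        Finset.mem_product, Finset.mem_union, Subtype.exists, Finset.mem_range]
      constructor
      · rintro ⟨m, hm, ⟨t, r⟩, ⟨htri, hr⟩, rfl⟩
        dsimp only at htri hr ⊢
        have hr' := (ih (n - m) (by omega) c r).mp hr
        have htree : IsGoodTree A (c - 1) m t ∨ IsGoodTree A c m t ∨ IsGoodTree A (c + 1) m t := by
          rcases htri with (h | h) | h
          · exact Or.inl ((finTS_mem_of A m (ih m hm) _ t).mp h)
          · exact Or.inr (Or.inl ((finTS_mem_of A m (ih m hm) _ t).mp h))
          · exact Or.inr (Or.inr ((finTS_mem_of A m (ih m hm) _ t).mp h))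
        have hG : t.Good ∧ (∀ v ∈ t.labels, A v) ∧ t.numEdges = m ∧
            (t.label = c - 1 ∨ t.label = c ∨ t.label = c + 1) := by
          rcases htree with h | h | h
          · exact ⟨h.1, h.2.1, h.2.2.2, Or.inl h.2.2.1⟩
          · exact ⟨h.1, h.2.1, h.2.2.2, Or.inr (Or.inl h.2.2.1)⟩
          · exact ⟨h.1, h.2.1, h.2.2.2, Or.inr (Or.inr h.2.2.1)⟩
        refine ⟨?_, ?_, ?_⟩
        · rw [LTree.GoodL]
          refine ⟨by rw [abs_le]; omega, hG.1, hr'.1⟩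
        · intro v hv
          rw [LTree.labelsL, Multiset.mem_add] at hv
          rcases hv with hv | hv
          · exact hG.2.1 v hv
          · exact hr'.2.1 v hv
        · rw [LTree.numEdgesL, hG.2.2.1, hr'.2.2]
          omega
      · rintro ⟨h1, h2, h3⟩
        cases ts with
        | nil => rw [LTree.numEdgesL] at h3; omega
        | cons t r =>
          rw [LTree.GoodL] at h1
          obtain ⟨habs, hGt, hGr⟩ := h1
          rw [LTree.numEdgesL] at h3
          refine ⟨t.numEdges, by omega, ⟨t, r⟩, ⟨?_, ?_⟩, rfl⟩
          · have hla : t.label = c - 1 ∨ t.label = c ∨ t.label = c + 1 := by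
              rw [abs_le] at habs; omega
            have hlab : ∀ v ∈ t.labels, A v := fun v hv =>
              h2 v (by rw [LTree.labelsL, Multiset.mem_add]; exact Or.inl hv)
            rcases hla with hla | hla | hla
            · exact Or.inl (Or.inl ((finTS_mem_of A _ (ih _ (by omega))
                _ t).mpr ⟨hGt, hlab, hla, rfl⟩))
            · exact Or.inl (Or.inr ((finTS_mem_of A _ (ih _ (by omega))
                _ t).mpr ⟨hGt, hlab, hla, rfl⟩))
            · exact Or.inr ((finTS_mem_of A _ (ih _ (by omega))
                _ t).mpr ⟨hGt, hlab, hla, rfl⟩)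
          · exact (ih (n - t.numEdges) (by omega) c r).mpr
              ⟨hGr, fun v hv => h2 v (by rw [LTree.labelsL, Multiset.mem_add]; exact Or.inr hv),
                by omega⟩

theorem mem_finTS (c : ℤ) (n : ℕ) (T : LTree) :
    T ∈ finTS A c n ↔ IsGoodTree A c n T :=
  finTS_mem_of A n (mem_finFS A n) c T

theorem numEdges_of_mem_tri {c : ℤ} {m : ℕ} {t : LTree}
    (h : t ∈ finTS A (c - 1) m ∪ finTS A c m ∪ finTS A (c + 1) m) : t.numEdges = m := by
  rw [Finset.mem_union, Finset.mem_union] at h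
  rcases h with (h | h) | h <;> exact ((mem_finTS A _ m t).mp h).2.2.2

theorem label_of_mem_finTS {c : ℤ} {m : ℕ} {t : LTree} (h : t ∈ finTS A c m) :
    t.label = c := ((mem_finTS A c m t).mp h).2.2.1

theorem card_finFS_zero (c : ℤ) : (finFS A 0 c).card = 1 := by
  rw [finFS]
  rfl

theorem card_finFS_succ (n : ℕ) (c : ℤ) :
    (finFS A (n + 1) c).card = ∑ m ∈ range (n + 1),
      ((finTS A (c - 1) m).card + (finTS A c m).card + (finTS A (c + 1) m).card) *
        (finFS A (n - m) c).card := by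
  have fold : ∀ (c' : ℤ) (m : ℕ),
      (if A c' then (finFS A m c').image (LTree.node c') else ∅) = finTS A c' m :=
    fun _ _ => rfl
  rw [finFS]
  simp only [fold]
  rw [Finset.card_biUnion]
  · rw [← Finset.sum_attach (range (n + 1)) (fun m =>
      ((finTS A (c - 1) m).card + (finTS A c m).card + (finTS A (c + 1) m).card) *
        (finFS A (n - m) c).card)]
    refine Finset.sum_congr rfl fun m _ => ?_
    rw [Finset.card_image_of_injective _ cons_pair_injective, Finset.card_product]
    congr 1
    have d1 : Disjoint (finTS A (c - 1) m.1) (finTS A c m.1) := by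
      rw [Finset.disjoint_left]
      intro t h1 h2
      have := label_of_mem_finTS A h1
      have := label_of_mem_finTS A h2
      omega
    have d2 : Disjoint (finTS A (c - 1) m.1 ∪ finTS A c m.1) (finTS A (c + 1) m.1) := by
      rw [Finset.disjoint_left]
      intro t h1 h2
      have h3 := label_of_mem_finTS A h2
      rw [Finset.mem_union] at h1
      rcases h1 with h1 | h1 <;> (have := label_of_mem_finTS A h1; omega)
    rw [Finset.card_union_of_disjoint d2, Finset.card_union_of_disjoint d1]
  · intro x _ y _ hxy
    simp only [Function.onFun]
    rw [Finset.disjoint_left]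
    intro ts h1 h2
    rw [Finset.mem_image] at h1 h2
    obtain ⟨⟨t1, r1⟩, hp1, he1⟩ := h1
    obtain ⟨⟨t2, r2⟩, hp2, he2⟩ := h2
    rw [Finset.mem_product] at hp1 hp2
    have ht1 := numEdges_of_mem_tri A hp1.1
    have ht2 := numEdges_of_mem_tri A hp2.1
    have h12 := he1.trans he2.symm
    simp only [List.cons.injEq] at h12
    refine hxy (Subtype.ext ?_)
    rw [← ht1, ← ht2, h12.1]

end Generic

def Apos : ℤ → Prop := fun z => 1 ≤ z

theorem card_finTS_pos : ∀ (n : ℕ) (c : ℤ), (finTS Apos c n).card = fseq c.toNat n := by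
  intro n
  induction n using Nat.strong_induction_on with
  | _ n ih =>
    intro c
    by_cases hA : Apos c
    · have hc1 : (1 : ℤ) ≤ c := hA
      have himg : ∀ m, (finTS Apos c m).card = (finFS Apos m c).card := by
        intro m
        rw [finTS, if_pos hA]
        exact Finset.card_image_of_injective _ (node_injective c)
      obtain ⟨k, hk⟩ : ∃ k, c.toNat = k + 1 := ⟨c.toNat - 1, by omega⟩
      match n with
      | 0 => rw [himg 0, card_finFS_zero, hk, fseq_succ_zero]
      | n + 1 =>
        rw [himg (n + 1), card_finFS_succ, hk, fseq_succ_succ]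
        refine Finset.sum_congr rfl fun m hm => ?_
        have hm' : m < n + 1 := Finset.mem_range.mp hm
        have e1 : (c - 1).toNat = k := by omega
        have e2 : (c + 1).toNat = k + 2 := by omega
        have hinner : (finFS Apos (n - m) c).card = fseq (k + 1) (n - m) := by
          rw [← himg (n - m), ih (n - m) (by omega) c, hk]
        rw [ih m hm' (c - 1), ih m hm' c, ih m hm' (c + 1), e1, hk, e2, hinner]
    · rw [finTS, if_neg hA]
      have hc0 : c.toNat = 0 := by
        unfold Apos at hA
        omega
      rw [hc0, fseq_zero, Finset.card_empty]

def Atriv : ℤ → Prop := fun _ => True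

theorem card_finTS_univ : ∀ (n : ℕ) (c : ℤ), (finTS Atriv c n).card = useq n := by
  intro n
  induction n using Nat.strong_induction_on with
  | _ n ih =>
    intro c
    have hA : Atriv c := trivial
    have himg : ∀ m (c' : ℤ), (finTS Atriv c' m).card = (finFS Atriv m c').card := by
      intro m c'
      rw [finTS, if_pos (show Atriv c' from trivial)]
      exact Finset.card_image_of_injective _ (node_injective c')
    match n with
    | 0 => rw [himg 0 c, card_finFS_zero, useq_zero]
    | n + 1 =>
      rw [himg (n + 1) c, card_finFS_succ, useq_succ]
      refine Finset.sum_congr rfl fun m hm => ?_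
      have hm' : m < n + 1 := Finset.mem_range.mp hm
      have hinner : (finFS Atriv (n - m) c).card = useq (n - m) := by
        rw [← himg (n - m) c, ih (n - m) (by omega) c]
      rw [ih m hm' (c - 1), ih m hm' c, ih m hm' (c + 1), hinner]
      ring

theorem ncard_WLTrees (n : ℕ) : (WLTrees n).ncard = fseq 1 n := by
  have hset : WLTrees n = ↑(finTS Apos 1 n) := by
    ext T
    rw [Finset.mem_coe, mem_finTS]
    exact Iff.rfl
  rw [hset, Set.ncard_coe_finset, card_finTS_pos n 1]
  rfl

theorem ncard_EmbTrees (n : ℕ) : (EmbTrees n).ncard = useq n := by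
  have hset : EmbTrees n = ↑(finTS Atriv 1 n) := by
    ext T
    rw [Finset.mem_coe, mem_finTS]
    constructor
    · rintro ⟨h1, h2, h3⟩
      exact ⟨h1, fun _ _ => trivial, h2, h3⟩
    · rintro ⟨h1, _, h3, h4⟩
      exact ⟨h1, h3, h4⟩
  rw [hset, Set.ncard_coe_finset, card_finTS_univ n 1]

end CVcount

open CVcount in
/-- Cori–Vauquelin formula: `|W_n| = (2/(n+2))·|U_n| = (2/(n+2))·(3^n/(n+1))·binom(2n,n)`. -/
theorem wellLabelled_count (n : ℕ) :
    (n + 2) * (WLTrees n).ncard = 2 * (EmbTrees n).ncard ∧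
      (n + 2) * ((n + 1) * (WLTrees n).ncard) = 2 * (3 ^ n * Nat.choose (2 * n) n) := by
  have hw := ncard_WLTrees n
  have he := ncard_EmbTrees n
  have hkey := key_nat n
  have useq_def : ∀ m : ℕ, useq m = 3 ^ m * catalan m := fun _ => rfl
  have hcat : (n + 2) * catalan (n + 1) = (4 * n + 2) * catalan n := by
    have h1 := succ_mul_catalan_eq_centralBinom (n + 1)
    have h2 := Nat.succ_mul_centralBinom_succ n
    have h3 := succ_mul_catalan_eq_centralBinom n
    have h4 : (n + 1) * ((n + 2) * catalan (n + 1)) = (n + 1) * ((4 * n + 2) * catalan n) := by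
      calc (n + 1) * ((n + 2) * catalan (n + 1))
          = (n + 1 + 1) * catalan (n + 1) * (n + 1) := by ring
        _ = Nat.centralBinom (n + 1) * (n + 1) := by rw [h1]
        _ = 2 * (2 * n + 1) * Nat.centralBinom n := by
              rw [← h2]; ring
        _ = 2 * (2 * n + 1) * ((n + 1) * catalan n) := by rw [h3]
        _ = (n + 1) * ((4 * n + 2) * catalan n) := by ring
    exact Nat.eq_of_mul_eq_mul_left (by omega) h4
  have hu1 : (n + 2) * useq (n + 1) = (12 * n + 6) * useq n := by
    rw [useq_def, useq_def]
    calc (n + 2) * (3 ^ (n + 1) * catalan (n + 1))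
        = 3 ^ n * 3 * ((n + 2) * catalan (n + 1)) := by rw [pow_succ]; ring
      _ = 3 ^ n * 3 * ((4 * n + 2) * catalan n) := by rw [hcat]
      _ = (12 * n + 6) * (3 ^ n * catalan n) := by ring
  have h9 : 9 * ((n + 2) * (WLTrees n).ncard) = 9 * (2 * (EmbTrees n).ncard) := by
    have hZ : (9 : ℤ) * ((n + 2) * (WLTrees n).ncard) = 9 * (2 * (EmbTrees n).ncard) := by
      have hkeyZ : (9 : ℤ) * fseq 1 n + useq (n + 1) = 12 * useq n := by exact_mod_cast hkey
      have hu1Z : ((n : ℤ) + 2) * useq (n + 1) = (12 * n + 6) * useq n := by exact_mod_cast hu1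
      rw [hw, he]
      push_cast
      linear_combination ((n : ℤ) + 2) * hkeyZ - hu1Z
    exact_mod_cast hZ
  have hc1 : (n + 2) * (WLTrees n).ncard = 2 * (EmbTrees n).ncard := by omega
  refine ⟨hc1, ?_⟩
  have hcb : (n + 1) * useq n = 3 ^ n * Nat.choose (2 * n) n := by
    rw [useq_def]
    have h := succ_mul_catalan_eq_centralBinom n
    unfold Nat.centralBinom at h
    calc (n + 1) * (3 ^ n * catalan n) = 3 ^ n * ((n + 1) * catalan n) := by ring
      _ = 3 ^ n * (2 * n).choose n := by rw [h]
  calc (n + 2) * ((n + 1) * (WLTrees n).ncard)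
      = (n + 1) * ((n + 2) * (WLTrees n).ncard) := by ring
    _ = (n + 1) * (2 * (EmbTrees n).ncard) := by rw [hc1]
    _ = 2 * ((n + 1) * useq n) := by rw [he]; ring
    _ = 2 * (3 ^ n * Nat.choose (2 * n) n) := by rw [hcb]
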